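/- Let N be a free ℤ-module with a symmetric bilinear form ⟨·,·⟩, and let f, w ∈ N with ⟨f, f⟩ = 0 and ⟨w, w⟩ even. Set w̃ := ½⟨w,w⟩f − w. Then the Eichler–Siegel transformation ψ_{f,w} factors as a product of two pseudo-reflections: ψ_{f,w} = s_{w̃, f} ∘ s_{f, w}, i.e., for every x ∈ N one has ψ_{f,w}(x) = s_{w̃,f}(s_{f,w}(x)). -/

import Mathlib

/-- The Eichler–Siegel transformation `ψ_{f,w}` associated to a bilinear form `B` on a
`ℤ`-module `N` and vectors `f, w ∈ N`, where `h` denotes the half `½⟨w,w⟩` of the (even)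
squared length of `w`:  `ψ_{f,w}(x) = x + ⟨x,f⟩w − ⟨x,w⟩f − ½⟨w,w⟩⟨x,f⟩f`. -/
noncomputable def eichlerSiegel {N : Type*} [AddCommGroup N] [Module ℤ N]
    (B : LinearMap.BilinForm ℤ N) (f w : N) (h : ℤ) : Module.End ℤ N :=
  LinearMap.id + (LinearMap.toSpanSingleton ℤ N w) ∘ₗ (B.flip f)
    - (LinearMap.toSpanSingleton ℤ N f) ∘ₗ (B.flip w)
    - h • ((LinearMap.toSpanSingleton ℤ N f) ∘ₗ (B.flip f))

/-- The pseudo-reflection `s_{u,v}(x) = x − ⟨x,v⟩u`. -/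
noncomputable def pseudoRefl {N : Type*} [AddCommGroup N] [Module ℤ N]
    (B : LinearMap.BilinForm ℤ N) (u v : N) : Module.End ℤ N :=
  LinearMap.id - (LinearMap.toSpanSingleton ℤ N u) ∘ₗ (B.flip v)

/-- if `⟨f,f⟩ = 0` and `⟨w,w⟩ = 2h`, then with `w̃ := ½⟨w,w⟩f − w = h•f − w`
the Eichler–Siegel transformation factors as `ψ_{f,w} = s_{w̃,f} ∘ s_{f,w}`. -/
theorem eichlerSiegel_eq_comp_pseudoRefl
    {N : Type*} [AddCommGroup N] [Module ℤ N] [Module.Free ℤ N]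
    (B : LinearMap.BilinForm ℤ N) (hsymm : ∀ x y, B x y = B y x)
    (f w : N) (h : ℤ) (hf : B f f = 0) (hw : B w w = 2 * h) :
    ∀ x : N, eichlerSiegel B f w h x =
      pseudoRefl B (h • f - w) f (pseudoRefl B f w x) := by
  suffices key : eichlerSiegel B f w h
      = (pseudoRefl B (h • f - w) f) ∘ₗ (pseudoRefl B f w) by
    intro x
    rw [key]
    rfl
  have hts : LinearMap.toSpanSingleton ℤ N (h • f - w)
      = h • LinearMap.toSpanSingleton ℤ N f - LinearMap.toSpanSingleton ℤ N w := by
    ext t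
    simp only [LinearMap.toSpanSingleton_apply, LinearMap.sub_apply, LinearMap.smul_apply,
      smul_sub]
    rw [smul_comm]
    rfl
  have h0 : (B.flip f) ∘ₗ (LinearMap.toSpanSingleton ℤ N f) = 0 := by
    ext t
    simp [LinearMap.toSpanSingleton_apply, hf]
  unfold eichlerSiegel pseudoRefl
  rw [hts]
  simp only [LinearMap.comp_sub, LinearMap.sub_comp, LinearMap.comp_id, LinearMap.id_comp,
    LinearMap.smul_comp, LinearMap.comp_smul, LinearMap.comp_assoc]
  rw [show (B.flip f) ∘ₗ ((LinearMap.toSpanSingleton ℤ N f) ∘ₗ (B.flip w))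
      = (0 : ℤ →ₗ[ℤ] ℤ) ∘ₗ (B.flip w) from by
    rw [← LinearMap.comp_assoc, h0]]
  simp only [LinearMap.zero_comp, LinearMap.comp_zero, smul_zero, sub_zero]
  abel
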